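/- For any k ≥ 1, the new depth of the poset of nonzero 0-1 vectors of length k (i.e., [n_1,…,n_k] with all n_i = 1, equivalently the poset of nonempty subsets of {1,2,…,k} ordered by inclusion) equals ⌈k/2⌉. -/

import Mathlib

/-- The poset `[n₁,…,n_k]`: nonzero vectors `x : Fin k → ℕ` with `x i ≤ n i` for all `i`,
ordered componentwise. -/
def ground {k : ℕ} (n : Fin k → ℕ) : Set (Fin k → ℕ) :=
  {x | x ≠ 0 ∧ ∀ i, x i ≤ n i}

/-- The depth of an element: the sum of its coordinates. -/
def depthv {k : ℕ} (x : Fin k → ℕ) : ℕ := ∑ i, x i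

/-- An interval partition of the poset `[n₁,…,n_k]`: a collection of pairs `(X,Y)` with
`X ≤ Y`, both in the poset, whose intervals `[X,Y] = Set.Icc X Y` are pairwise disjoint
and cover the poset. (Since `X` is nonzero and `Y` is bounded by `n`, each such interval
is a nonempty subset of the poset.) -/
structure IntervalPartition (k : ℕ) (n : Fin k → ℕ) where
  pairs : Set ((Fin k → ℕ) × (Fin k → ℕ))
  bot_mem : ∀ p ∈ pairs, p.1 ∈ ground n
  top_mem : ∀ p ∈ pairs, p.2 ∈ ground n
  bot_le_top : ∀ p ∈ pairs, p.1 ≤ p.2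
  covers : ∀ x ∈ ground n, ∃ p ∈ pairs, x ∈ Set.Icc p.1 p.2
  pairwise_disjoint : ∀ p ∈ pairs, ∀ q ∈ pairs, p ≠ q →
    Disjoint (Set.Icc p.1 p.2) (Set.Icc q.1 q.2)

/-- The new depth of an interval partition: the minimum over its intervals `[X,Y]`
of `depth Y`. -/
noncomputable def ndepthP {k : ℕ} {n : Fin k → ℕ} (P : IntervalPartition k n) : ℕ :=
  sInf ((fun p => depthv p.2) '' P.pairs)

/-- The new depth of the poset `[n₁,…,n_k]`: the maximum of `ndepthP P` over all
interval partitions `P`. -/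
noncomputable def ndepth {k : ℕ} (n : Fin k → ℕ) : ℕ :=
  sSup (Set.range (fun P : IntervalPartition k n => ndepthP P))

/-- For a 0-1 vector `u` (as a Boolean vector), `sVec n u` has `i`-th coordinate `n i`
if `u i = true` and `0` otherwise. -/
def sVec {k : ℕ} (n : Fin k → ℕ) (u : Fin k → Bool) : Fin k → ℕ :=
  fun i => if u i then n i else 0


open scoped Classical

section OddCore

variable {k : ℕ} [NeZero k]

/-- distance back from `x` to the nearest element of `S` (at least 1). -/
noncomputable def jd (S : Finset (ZMod k)) (x : ZMod k) : ℕ :=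
  sInf {j : ℕ | 0 < j ∧ x - (j : ZMod k) ∈ S}

lemma jd_exists {S : Finset (ZMod k)} (hS : S.Nonempty) (x : ZMod k) :
    {j : ℕ | 0 < j ∧ x - (j : ZMod k) ∈ S}.Nonempty := by
  obtain ⟨a, ha⟩ := hS
  by_cases hxa : x - a = 0
  · refine ⟨k, Nat.pos_of_ne_zero (NeZero.ne k), ?_⟩
    have : ((k : ℕ) : ZMod k) = 0 := ZMod.natCast_self k
    rw [this, sub_zero]
    have : x = a := by rwa [sub_eq_zero] at hxa
    rwa [this]
  · refine ⟨(x - a).val, ?_, ?_⟩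
    · rcases Nat.eq_zero_or_pos (x - a).val with h | h
      · exact absurd ((ZMod.val_eq_zero _).mp h) hxa
      · exact h
    · have h2 : (((x - a).val : ℕ) : ZMod k) = x - a := by simp [ZMod.natCast_val]
      rw [h2]; simpa using ha

lemma jd_spec {S : Finset (ZMod k)} (hS : S.Nonempty) (x : ZMod k) :
    0 < jd S x ∧ x - ((jd S x : ℕ) : ZMod k) ∈ S :=
  Nat.sInf_mem (jd_exists hS x)

omit [NeZero k] in
lemma jd_min {S : Finset (ZMod k)} (x : ZMod k) {t : ℕ} (ht : 0 < t)
    (h : t < jd S x) : x - (t : ZMod k) ∉ S :=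
  fun hm => Nat.notMem_of_lt_sInf h ⟨ht, hm⟩


/-- fill: add every point whose back-distance to `S` is even. -/
noncomputable def fS (S : Finset (ZMod k)) : Finset (ZMod k) :=
  S ∪ Finset.univ.filter (fun x => x ∉ S ∧ Even (jd S x))

lemma mem_fS {S : Finset (ZMod k)} {x : ZMod k} :
    x ∈ fS S ↔ x ∈ S ∨ (x ∉ S ∧ Even (jd S x)) := by
  simp [fS]

lemma subset_fS (S : Finset (ZMod k)) : S ⊆ fS S := Finset.subset_union_left

/-- tops: no two consecutive missing elements. -/
def CTop (B : Finset (ZMod k)) : Prop := ∀ x, x ∉ B → x - 1 ∈ B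

/-- the forced part of a top. -/
noncomputable def botF (B : Finset (ZMod k)) : Finset (ZMod k) :=
  B.filter (fun x => x - 1 ∈ B)

omit [NeZero k] in
lemma botF_subset (B : Finset (ZMod k)) : botF B ⊆ B := Finset.filter_subset _ _

lemma jd_pred {S : Finset (ZMod k)} (hS : S.Nonempty) {x : ZMod k}
    (h2 : 2 ≤ jd S x) : jd S (x - 1) = jd S x - 1 := by
  have hspec := jd_spec hS x
  apply le_antisymm
  · apply Nat.sInf_le
    refine ⟨by omega, ?_⟩
    have hc : (((jd S x - 1 : ℕ)) : ZMod k) = ((jd S x : ℕ) : ZMod k) - 1 := by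
      have := Nat.cast_sub (R := ZMod k) (show 1 ≤ jd S x by omega)
      simpa using this
    rw [hc]
    have : x - 1 - (((jd S x : ℕ) : ZMod k) - 1) = x - ((jd S x : ℕ) : ZMod k) := by ring
    rw [this]; exact hspec.2
  · have hne := jd_exists hS (x - 1)
    apply le_csInf hne
    rintro t ⟨ht, hmem⟩
    by_contra hlt
    push_neg at hlt
    have h1 : x - ((t + 1 : ℕ) : ZMod k) ∈ S := by
      have : x - 1 - (t : ZMod k) = x - ((t + 1 : ℕ) : ZMod k) := by push_cast; ring
      rwa [this] at hmem
    exact jd_min x (by omega) (by omega) h1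

/-- The key alternation lemma. -/
lemma alt {S B : Finset (ZMod k)} (hB : CTop B) (hAS : botF B ⊆ S) (hSB : S ⊆ B)
    (hS : S.Nonempty) {x : ZMod k} (hx : x ∉ S) :
    ∀ t, t ≤ jd S x → ((x - ((jd S x : ℕ) : ZMod k) + (t : ZMod k)) ∈ B ↔ Even t) := by
  intro t
  induction t with
  | zero =>
    intro _
    simpa using hSB (jd_spec hS x).2
  | succ t ih =>
    intro hle
    have ht : t ≤ jd S x := by omega
    have ihh := ih ht
    have hpnotS : x - ((jd S x : ℕ) : ZMod k) + ((t + 1 : ℕ) : ZMod k) ∉ S := by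
      rcases Nat.lt_or_ge (t + 1) (jd S x) with h | h
      · have hc : x - ((jd S x : ℕ) : ZMod k) + ((t + 1 : ℕ) : ZMod k)
            = x - ((jd S x - (t + 1) : ℕ) : ZMod k) := by
          have h2 := Nat.cast_sub (R := ZMod k) (le_of_lt h)
          rw [h2]; push_cast; ring
        rw [hc]
        exact jd_min x (by omega) (by omega)
      · have heq : t + 1 = jd S x := by omega
        have hc : x - ((jd S x : ℕ) : ZMod k) + ((t + 1 : ℕ) : ZMod k) = x := by
          rw [heq]; ring
        rwa [hc]
    by_cases hEt : Even t
    · have hmem := ihh.mpr hEt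
      constructor
      · intro hpB
        exfalso
        have hpred : (x - ((jd S x : ℕ) : ZMod k) + ((t + 1 : ℕ) : ZMod k)) - 1
            = x - ((jd S x : ℕ) : ZMod k) + ((t : ℕ) : ZMod k) := by push_cast; ring
        have hbot : x - ((jd S x : ℕ) : ZMod k) + ((t + 1 : ℕ) : ZMod k) ∈ botF B :=
          Finset.mem_filter.mpr ⟨hpB, by rw [hpred]; exact hmem⟩
        exact hpnotS (hAS hbot)
      · intro h
        exact absurd h (by simp [Nat.even_add_one, hEt])
    · have hnotB : x - ((jd S x : ℕ) : ZMod k) + ((t : ℕ) : ZMod k) ∉ B :=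
        fun h => hEt (ihh.mp h)
      have hp : x - ((jd S x : ℕ) : ZMod k) + ((t + 1 : ℕ) : ZMod k) ∈ B := by
        by_contra hpB
        have h1 := hB _ hpB
        have hpred : (x - ((jd S x : ℕ) : ZMod k) + ((t + 1 : ℕ) : ZMod k)) - 1
            = x - ((jd S x : ℕ) : ZMod k) + ((t : ℕ) : ZMod k) := by push_cast; ring
        rw [hpred] at h1
        exact hnotB h1
      push_cast at hp ⊢
      simp [hp, Nat.even_add_one, hEt]
omit [NeZero k] in
lemma cast_jd_cancel {S : Finset (ZMod k)} (x : ZMod k) :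
    x - ((jd S x : ℕ) : ZMod k) + ((jd S x : ℕ) : ZMod k) = x := by ring

/-- fibers of `fS` : if `botF B ⊆ S ⊆ B` then `fS S = B`. -/
lemma fS_eq {S B : Finset (ZMod k)} (hB : CTop B) (hAS : botF B ⊆ S) (hSB : S ⊆ B)
    (hS : S.Nonempty) : fS S = B := by
  apply Finset.Subset.antisymm
  · intro x hxf
    rcases mem_fS.mp hxf with hxS | ⟨hxS, hev⟩
    · exact hSB hxS
    · have := (alt hB hAS hSB hS hxS (jd S x) le_rfl).mpr hev
      rwa [cast_jd_cancel] at this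
  · intro x hxB
    by_cases hxS : x ∈ S
    · exact subset_fS S hxS
    · have h1 : x - ((jd S x : ℕ) : ZMod k) + ((jd S x : ℕ) : ZMod k) ∈ B := by
        rwa [cast_jd_cancel]
      have hev := (alt hB hAS hSB hS hxS (jd S x) le_rfl).mp h1
      exact mem_fS.mpr (Or.inr ⟨hxS, hev⟩)

/-- the bottom of the fiber is contained in `S`. -/
lemma botF_fS_subset {S : Finset (ZMod k)} (hS : S.Nonempty) : botF (fS S) ⊆ S := by
  intro x hx
  rcases Finset.mem_filter.mp hx with ⟨hxB, hx1B⟩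
  by_contra hxS
  have hev : Even (jd S x) := ((mem_fS.mp hxB).resolve_left hxS).2
  have hpos : 0 < jd S x := (jd_spec hS x).1
  have h2 : 2 ≤ jd S x := by
    rcases hev with ⟨r, hr⟩; omega
  have hx1S : x - 1 ∉ S := by
    have := jd_min (S := S) x (t := 1) (by norm_num) (by omega)
    simpa using this
  have hjd1 : jd S (x - 1) = jd S x - 1 := jd_pred hS h2
  have hodd : ¬ Even (jd S (x - 1)) := by
    rcases hev with ⟨r, hr⟩
    rintro ⟨s, hs⟩
    rw [hjd1] at hs
    omega
  rcases mem_fS.mp hx1B with h | ⟨_, h⟩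
  · exact hx1S h
  · exact hodd h

/-- `fS S` is a top. -/
lemma cTop_fS {S : Finset (ZMod k)} (hS : S.Nonempty) : CTop (fS S) := by
  intro x hx
  have hxS : x ∉ S := fun h => hx (subset_fS S h)
  have hnev : ¬ Even (jd S x) := fun h => hx (mem_fS.mpr (Or.inr ⟨hxS, h⟩))
  have hpos : 0 < jd S x := (jd_spec hS x).1
  by_cases h1 : jd S x = 1
  · have := (jd_spec hS x).2
    rw [h1] at this
    exact subset_fS S (by simpa using this)
  · have h3 : 2 ≤ jd S x := by omega
    have hx1S : x - 1 ∉ S := by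
      have := jd_min (S := S) x (t := 1) (by norm_num) (by omega)
      simpa using this
    have hjd1 : jd S (x - 1) = jd S x - 1 := jd_pred hS h3
    have hev : Even (jd S (x - 1)) := by
      rw [hjd1]
      rcases Nat.even_or_odd (jd S x) with h | h
      · exact absurd h hnev
      · rcases h with ⟨r, hr⟩
        exact ⟨r, by omega⟩
    exact mem_fS.mpr (Or.inr ⟨hx1S, hev⟩)

/-- for odd `k`, the bottom of a top is nonempty. -/
lemma botF_nonempty (hodd : Odd k) {B : Finset (ZMod k)} (hB : CTop B) :
    (botF B).Nonempty := by
  rw [Finset.nonempty_iff_ne_empty]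
  intro hemp
  have key : ∀ x : ZMod k, x ∈ B ↔ x - 1 ∉ B := by
    intro x
    constructor
    · intro hx hx1
      have : x ∈ botF B := Finset.mem_filter.mpr ⟨hx, hx1⟩
      simp [hemp] at this
    · intro hx1
      by_contra hx
      exact hx1 (hB x hx)
  have himg : B.image (fun x => x - 1) = Bᶜ := by
    ext y
    simp only [Finset.mem_image, Finset.mem_compl]
    constructor
    · rintro ⟨x, hx, rfl⟩
      exact (key x).mp hx
    · intro hy
      refine ⟨y + 1, ?_, by ring⟩
      have h2 := key (y + 1)
      simp only [add_sub_cancel_right] at h2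
      exact h2.mpr hy
  have hcard : B.card = Bᶜ.card := by
    rw [← himg, Finset.card_image_of_injective _ (sub_left_injective)]
  have hcompl : Bᶜ.card = k - B.card := by
    rw [Finset.card_compl]
    congr 1
    simp [ZMod.card]
  have hle : B.card ≤ k := by
    have := Finset.card_le_card (Finset.subset_univ B)
    simpa [ZMod.card] using this
  rcases hodd with ⟨m, hm⟩
  omega

/-- a top has at least `(k+1)/2` elements. -/
lemma card_top {B : Finset (ZMod k)} (hB : CTop B) : (k + 1) / 2 ≤ B.card := by
  have himg : Bᶜ.image (fun x => x - 1) ⊆ B := by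
    intro y hy
    rcases Finset.mem_image.mp hy with ⟨x, hx, rfl⟩
    exact hB x (Finset.mem_compl.mp hx)
  have h1 : Bᶜ.card ≤ B.card := by
    calc Bᶜ.card = (Bᶜ.image (fun x => x - 1)).card :=
          (Finset.card_image_of_injective _ (sub_left_injective)).symm
      _ ≤ B.card := Finset.card_le_card himg
  have hcompl : Bᶜ.card = k - B.card := by
    rw [Finset.card_compl]; congr 1; simp [ZMod.card]
  have hle : B.card ≤ k := by
    have := Finset.card_le_card (Finset.subset_univ B)
    simpa [ZMod.card] using this
  omega
end OddCore
section Transfer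

variable {k : ℕ} [NeZero k] (e : ZMod k ≃ Fin k)

/-- 0-1 vector of a finset. -/
def vecOf (T : Finset (ZMod k)) : Fin k → ℕ := fun i => if e.symm i ∈ T then 1 else 0

/-- support finset of a vector. -/
noncomputable def supOf (x : Fin k → ℕ) : Finset (ZMod k) :=
  Finset.univ.filter (fun z => x (e z) = 1)

lemma mem_supOf {x : Fin k → ℕ} {z : ZMod k} : z ∈ supOf e x ↔ x (e z) = 1 := by
  simp [supOf]

lemma vecOf_le_one (T : Finset (ZMod k)) (i : Fin k) : vecOf e T i ≤ 1 := by
  unfold vecOf; split <;> omega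

lemma vecOf_injective : Function.Injective (vecOf e) := by
  intro A B h
  ext z
  have := congrFun h (e z)
  simp only [vecOf, Equiv.symm_apply_apply] at this
  by_cases hA : z ∈ A <;> by_cases hB : z ∈ B <;> simp [hA, hB] at this ⊢

lemma vecOf_mono {A B : Finset (ZMod k)} (h : A ⊆ B) : vecOf e A ≤ vecOf e B := by
  intro i
  unfold vecOf
  by_cases hA : e.symm i ∈ A
  · simp [hA, h hA]
  · simp [hA]

lemma vecOf_mem_ground {T : Finset (ZMod k)} (hT : T.Nonempty) :
    vecOf e T ∈ ground (fun _ : Fin k => 1) := by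
  constructor
  · obtain ⟨z, hz⟩ := hT
    intro h0
    have := congrFun h0 (e z)
    simp only [vecOf, Equiv.symm_apply_apply, hz] at this
    simp at this
  · intro i; exact vecOf_le_one e T i

lemma le_vecOf_iff {x : Fin k → ℕ} (hx : ∀ i, x i ≤ 1) {B : Finset (ZMod k)} :
    x ≤ vecOf e B ↔ supOf e x ⊆ B := by
  constructor
  · intro h z hz
    have h1 := h (e z)
    rw [mem_supOf] at hz
    simp only [vecOf, Equiv.symm_apply_apply, hz] at h1
    by_contra hzB
    simp [hzB] at h1
  · intro h i
    by_cases hB : e.symm i ∈ B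
    · simpa [vecOf, hB] using hx i
    · simp only [vecOf, hB, if_false]
      by_contra hxi
      push_neg at hxi
      have hxi1 : x i = 1 := by have := hx i; omega
      have : e.symm i ∈ supOf e x := by
        rw [mem_supOf]; simpa using hxi1
      exact hB (h this)

lemma vecOf_le_iff {x : Fin k → ℕ} (hx : ∀ i, x i ≤ 1) {A : Finset (ZMod k)} :
    vecOf e A ≤ x ↔ A ⊆ supOf e x := by
  constructor
  · intro h z hz
    have h1 := h (e z)
    simp only [vecOf, Equiv.symm_apply_apply, hz, if_true] at h1
    rw [mem_supOf]
    have := hx (e z); omega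
  · intro h i
    by_cases hA : e.symm i ∈ A
    · have h2 := h hA
      rw [mem_supOf] at h2
      have h3 : x i = 1 := by simpa using h2
      simp [vecOf, hA, h3]
    · simp [vecOf, hA]

lemma depthv_vecOf (B : Finset (ZMod k)) : depthv (vecOf e B) = B.card := by
  unfold depthv vecOf
  rw [Fintype.sum_equiv e.symm (fun i => if e.symm i ∈ B then (1:ℕ) else 0)
    (fun z => if z ∈ B then (1:ℕ) else 0) (fun i => rfl)]
  simp [Finset.sum_ite_mem]

lemma le_one_of_mem_Icc {A B : Finset (ZMod k)} {x : Fin k → ℕ}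
    (hx : x ∈ Set.Icc (vecOf e A) (vecOf e B)) : ∀ i, x i ≤ 1 := by
  intro i
  have := hx.2 i
  exact le_trans this (vecOf_le_one e B i)

end Transfer

/-- Existence of a good partition, odd case. -/
theorem exists_part_odd {k : ℕ} (hk : 1 ≤ k) (hodd : Odd k) :
    ∃ P : IntervalPartition k (fun _ => 1), ∀ p ∈ P.pairs, (k + 1) / 2 ≤ depthv p.2 := by
  haveI : NeZero k := ⟨by omega⟩
  obtain ⟨e⟩ : Nonempty (ZMod k ≃ Fin k) := ⟨Fintype.equivFinOfCardEq (ZMod.card k)⟩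
  refine ⟨⟨{p | ∃ B : Finset (ZMod k), B.Nonempty ∧ CTop B ∧
      p = (vecOf e (botF B), vecOf e B)}, ?_, ?_, ?_, ?_, ?_⟩, ?_⟩
  · rintro p ⟨B, hBne, hBtop, rfl⟩
    exact vecOf_mem_ground e (botF_nonempty hodd hBtop)
  · rintro p ⟨B, hBne, hBtop, rfl⟩
    exact vecOf_mem_ground e hBne
  · rintro p ⟨B, hBne, hBtop, rfl⟩
    exact vecOf_mono e (botF_subset B)
  · -- covers
    rintro x ⟨hx0, hx1⟩
    have hSne : (supOf e x).Nonempty := by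
      have : ∃ i, x i ≠ 0 := by
        by_contra h
        push_neg at h
        exact hx0 (funext fun i => h i)
      obtain ⟨i, hi⟩ := this
      refine ⟨e.symm i, ?_⟩
      rw [mem_supOf]
      have h1 : x i ≤ 1 := hx1 i
      simp only [Equiv.apply_symm_apply]
      omega
    refine ⟨(vecOf e (botF (fS (supOf e x))), vecOf e (fS (supOf e x))),
      ⟨fS (supOf e x), hSne.mono (subset_fS _), cTop_fS hSne, rfl⟩, ?_, ?_⟩
    · exact (vecOf_le_iff e hx1).mpr (botF_fS_subset hSne)
    · exact (le_vecOf_iff e hx1).mpr (by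
        intro z hz
        exact subset_fS _ (by rwa [mem_supOf] at hz ⊢))
  · -- disjoint
    rintro p ⟨B, hBne, hBtop, rfl⟩ q ⟨B', hBne', hBtop', rfl⟩ hpq
    rw [Set.disjoint_left]
    rintro x hxp hxq
    apply hpq
    have hx1 : ∀ i, x i ≤ 1 := le_one_of_mem_Icc e hxp
    have h1 : botF B ⊆ supOf e x := (vecOf_le_iff e hx1).mp hxp.1
    have h2 : supOf e x ⊆ B := (le_vecOf_iff e hx1).mp hxp.2
    have h3 : botF B' ⊆ supOf e x := (vecOf_le_iff e hx1).mp hxq.1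
    have h4 : supOf e x ⊆ B' := (le_vecOf_iff e hx1).mp hxq.2
    have hSne : (supOf e x).Nonempty := (botF_nonempty hodd hBtop).mono h1
    have hBB' : B = B' := by
      rw [← fS_eq hBtop h1 h2 hSne, ← fS_eq hBtop' h3 h4 hSne]
    subst hBB'
    rfl
  · rintro p ⟨B, hBne, hBtop, rfl⟩
    simpa [depthv_vecOf] using card_top hBtop
section Extend

lemma snoc_ground {m : ℕ} {X : Fin m → ℕ} (hX : X ∈ ground (fun _ : Fin m => 1)) :
    Fin.snoc X 0 ∈ ground (fun _ : Fin (m+1) => 1) := by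
  constructor
  · intro h0
    apply hX.1
    funext j
    have := congrFun h0 (Fin.castSucc j)
    simpa [Fin.snoc_castSucc] using this
  · intro i
    refine Fin.lastCases ?_ ?_ i
    · simp [Fin.snoc_last]
    · intro j; simpa [Fin.snoc_castSucc] using hX.2 j

lemma snoc_mono {m : ℕ} {X Y : Fin m → ℕ} (h : X ≤ Y) :
    (Fin.snoc X 0 : Fin (m+1) → ℕ) ≤ Fin.snoc Y 0 := by
  intro i
  refine Fin.lastCases ?_ ?_ i
  · simp [Fin.snoc_last]
  · intro j; simpa [Fin.snoc_castSucc] using h j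

lemma mem_Icc_snoc {m : ℕ} {X Y : Fin m → ℕ} {z : Fin (m+1) → ℕ}
    (hz : z ∈ Set.Icc (Fin.snoc X 0) (Fin.snoc Y 0)) :
    Fin.init z ∈ Set.Icc X Y ∧ z (Fin.last m) = 0 := by
  constructor
  · constructor
    · intro j
      have := hz.1 (Fin.castSucc j)
      simpa [Fin.snoc_castSucc, Fin.init] using this
    · intro j
      have := hz.2 (Fin.castSucc j)
      simpa [Fin.snoc_castSucc, Fin.init] using this
  · have := hz.2 (Fin.last m)
    simpa [Fin.snoc_last] using this

theorem exists_part {k : ℕ} (hk : 1 ≤ k) :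
    ∃ P : IntervalPartition k (fun _ => 1), ∀ p ∈ P.pairs, (k + 1) / 2 ≤ depthv p.2 := by
  rcases Nat.even_or_odd k with hev | hodd
  · obtain ⟨m, rfl⟩ : ∃ m, k = m + 1 := ⟨k - 1, by omega⟩
    have hmodd : Odd m := by
      rcases hev with ⟨t, ht⟩; exact ⟨t - 1, by omega⟩
    have hm1 : 1 ≤ m := hmodd.pos
    obtain ⟨P₀, hP₀⟩ := exists_part_odd hm1 hmodd
    have hbnd : (m + 1 + 1) / 2 = (m + 1) / 2 := by
      rcases hmodd with ⟨t, ht⟩; omega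
    refine ⟨⟨(fun p => ((Fin.snoc p.1 0 : Fin (m+1) → ℕ), (Fin.snoc p.2 0 : Fin (m+1) → ℕ))) ''
        P₀.pairs ∪ {((Fin.snoc (0 : Fin m → ℕ) 1 : Fin (m+1) → ℕ), fun _ => 1)},
        ?_, ?_, ?_, ?_, ?_⟩, ?_⟩
    · rintro p (⟨q, hq, rfl⟩ | hsp)
      · exact snoc_ground (P₀.bot_mem q hq)
      · rw [Set.mem_singleton_iff] at hsp; subst hsp
        constructor
        · intro h0
          have := congrFun h0 (Fin.last m)
          simpa [Fin.snoc_last] using this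
        · intro i
          refine Fin.lastCases ?_ ?_ i
          · simp [Fin.snoc_last]
          · intro j; simp [Fin.snoc_castSucc]
    · rintro p (⟨q, hq, rfl⟩ | hsp)
      · exact snoc_ground (P₀.top_mem q hq)
      · rw [Set.mem_singleton_iff] at hsp; subst hsp
        refine ⟨?_, fun i => le_rfl⟩
        intro h0
        have := congrFun h0 ⟨0, by omega⟩
        simpa using this
    · rintro p (⟨q, hq, rfl⟩ | hsp)
      · exact snoc_mono (P₀.bot_le_top q hq)
      · rw [Set.mem_singleton_iff] at hsp; subst hsp
        intro i
        refine Fin.lastCases ?_ ?_ i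
        · simp [Fin.snoc_last]
        · intro j; simp [Fin.snoc_castSucc]
    · -- covers
      rintro x ⟨hx0, hx1⟩
      by_cases hlast : x (Fin.last m) = 0
      · have hinit : Fin.init x ∈ ground (fun _ : Fin m => 1) := by
          constructor
          · intro h0
            apply hx0
            funext i
            refine Fin.lastCases ?_ ?_ i
            · exact hlast
            · intro j
              have := congrFun h0 j
              simpa [Fin.init] using this
          · intro j; exact hx1 (Fin.castSucc j)
        obtain ⟨q, hq, hqi⟩ := P₀.covers (Fin.init x) hinit
        refine ⟨((Fin.snoc q.1 0 : Fin (m+1) → ℕ), (Fin.snoc q.2 0 : Fin (m+1) → ℕ)),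
          Or.inl ⟨q, hq, rfl⟩, ?_, ?_⟩
        · intro i
          refine Fin.lastCases ?_ ?_ i
          · simp [Fin.snoc_last]
          · intro j; simpa [Fin.snoc_castSucc, Fin.init] using hqi.1 j
        · intro i
          refine Fin.lastCases ?_ ?_ i
          · simp [Fin.snoc_last, hlast]
          · intro j; simpa [Fin.snoc_castSucc, Fin.init] using hqi.2 j
      · refine ⟨((Fin.snoc (0 : Fin m → ℕ) 1 : Fin (m+1) → ℕ), fun _ => 1),
          Or.inr rfl, ?_, fun i => hx1 i⟩
        intro i
        refine Fin.lastCases ?_ ?_ i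
        · have := hx1 (Fin.last m)
          simp only [Fin.snoc_last]
          omega
        · intro j; simp [Fin.snoc_castSucc]
    · -- disjoint
      rintro p (⟨q, hq, rfl⟩ | hsp) p' (⟨q', hq', rfl⟩ | hsp') hpq
      · rw [Set.disjoint_left]
        rintro z hz hz'
        have h1 := mem_Icc_snoc hz
        have h2 := mem_Icc_snoc hz'
        have hqq' : q ≠ q' := by
          rintro rfl; exact hpq rfl
        have hdisj := P₀.pairwise_disjoint q hq q' hq' hqq'
        rw [Set.disjoint_left] at hdisj
        exact hdisj h1.1 h2.1
      · rw [Set.mem_singleton_iff] at hsp'; subst hsp'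
        rw [Set.disjoint_left]
        rintro z hz hz'
        have h1 := (mem_Icc_snoc hz).2
        have h2 := hz'.1 (Fin.last m)
        simp only [Fin.snoc_last] at h2
        omega
      · rw [Set.mem_singleton_iff] at hsp; subst hsp
        rw [Set.disjoint_left]
        rintro z hz hz'
        have h1 := (mem_Icc_snoc hz').2
        have h2 := hz.1 (Fin.last m)
        simp only [Fin.snoc_last] at h2
        omega
      · rw [Set.mem_singleton_iff] at hsp; rw [Set.mem_singleton_iff] at hsp'
        subst hsp; subst hsp'
        exact absurd rfl hpq
    · rintro p (⟨q, hq, rfl⟩ | hsp)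
      · have : depthv (Fin.snoc q.2 0 : Fin (m+1) → ℕ) = depthv q.2 := by
          unfold depthv
          rw [Fin.sum_univ_castSucc]
          simp [Fin.snoc_castSucc, Fin.snoc_last]
        rw [hbnd, this]
        exact hP₀ q hq
      · rw [Set.mem_singleton_iff] at hsp; subst hsp
        have : depthv (fun _ : Fin (m+1) => (1:ℕ)) = m + 1 := by
          unfold depthv; simp
        simp only [this]
        omega
  · exact exists_part_odd hk hodd

end Extend
section Upper

variable {k : ℕ}

/-- the `i`-th unit vector. -/
def eVec (i : Fin k) : Fin k → ℕ := fun j => if j = i then 1 else 0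

lemma eVec_ground (i : Fin k) : eVec i ∈ ground (fun _ : Fin k => 1) := by
  constructor
  · intro h0
    have := congrFun h0 i
    simp [eVec] at this
  · intro j
    show eVec i j ≤ 1
    unfold eVec; split <;> omega

lemma eVec_inj : Function.Injective (eVec (k := k)) := by
  intro i j h
  by_contra hij
  have h2 := congrFun h i
  simp [eVec, hij] at h2

theorem ndepthP_le (hk : 1 ≤ k) (P : IntervalPartition k (fun _ => 1)) :
    ndepthP P ≤ (k + 1) / 2 := by
  classical
  have hcov := fun i : Fin k => P.covers (eVec i) (eVec_ground i)
  choose p hpmem hpicc using hcov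
  -- bottoms are the unit vectors
  have hbot : ∀ i, (p i).1 = eVec i := by
    intro i
    have h1 := hpicc i |>.1
    have hg := P.bot_mem _ (hpmem i)
    funext j
    by_cases hij : j = i
    · subst hij
      have h2 : (p j).1 j ≤ 1 := by simpa [eVec] using h1 j
      have hgoal : eVec j j = 1 := by simp [eVec]
      rw [hgoal]
      rcases Nat.lt_or_ge ((p j).1 j) 1 with h | h
      · exfalso
        apply hg.1
        funext t
        show (p j).1 t = 0
        by_cases ht : t = j
        · subst ht; omega
        · have h3 := h1 t
          simp only [eVec, if_neg ht] at h3
          omega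
      · omega
    · have h2 := h1 j
      simp only [eVec, if_neg hij] at h2
      have h0 : (p i).1 j = 0 := Nat.le_zero.mp h2
      simp [eVec, hij, h0]
  have hYi : ∀ i, 1 ≤ (p i).2 i := by
    intro i
    have := P.bot_le_top _ (hpmem i) i
    rw [hbot i] at this
    simpa [eVec] using this
  have hY1 : ∀ i j, (p i).2 j ≤ 1 := fun i j => (P.top_mem _ (hpmem i)).2 j
  -- tournament
  have htour : ∀ i j : Fin k, i ≠ j → ¬(1 ≤ (p i).2 j ∧ 1 ≤ (p j).2 i) := by
    rintro i j hij ⟨h1, h2⟩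
    have hne : p i ≠ p j := by
      intro h
      apply hij
      apply eVec_inj
      rw [← hbot i, ← hbot j, h]
    have hdisj := P.pairwise_disjoint _ (hpmem i) _ (hpmem j) hne
    rw [Set.disjoint_left] at hdisj
    set w : Fin k → ℕ := fun t => if t = i ∨ t = j then 1 else 0 with hw
    have hwi : w ∈ Set.Icc (p i).1 (p i).2 := by
      rw [hbot i]
      constructor
      · intro t
        simp only [eVec, hw]
        by_cases ht : t = i
        · simp [ht]
        · simp [ht]
      · intro t
        simp only [hw]
        by_cases ht : t = i
        · subst ht; simpa using hYi t
        · by_cases ht' : t = j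
          · subst ht'; simpa using h1
          · simp [ht, ht']
    have hwj : w ∈ Set.Icc (p j).1 (p j).2 := by
      rw [hbot j]
      constructor
      · intro t
        simp only [eVec, hw]
        by_cases ht : t = j
        · simp [ht]
        · simp [ht]
      · intro t
        simp only [hw]
        by_cases ht : t = i
        · subst ht; simpa using h2
        · by_cases ht' : t = j
          · subst ht'; simpa using hYi t
          · simp [ht, ht']
    exact hdisj hwi hwj
  -- T i
  set T : Fin k → Finset (Fin k) := fun i => Finset.univ.filter (fun j => 1 ≤ (p i).2 j) with hT
  have hdepth : ∀ i, depthv (p i).2 = (T i).card := by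
    intro i
    unfold depthv
    rw [hT]
    rw [Finset.card_filter]
    apply Finset.sum_congr rfl
    intro j _
    have := hY1 i j
    split <;> omega
  -- ∃ i with small T i
  have hsmall : ∃ i : Fin k, (T i).card ≤ (k + 1) / 2 := by
    by_contra hcon
    push_neg at hcon
    have hmemii : ∀ i, i ∈ T i := by
      intro i; simp [hT, hYi i]
    have hsum1 : ∀ i : Fin k, (T i).card = ((T i).erase i).card + 1 := by
      intro i
      rw [Finset.card_erase_add_one (hmemii i)]
    -- injection into 2-element subsets
    have hs2 : ∑ i : Fin k, ((T i).erase i).card ≤ Nat.choose k 2 := by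
      rw [← Finset.card_sigma]
      have : ((Finset.univ : Finset (Fin k)).sigma (fun i => (T i).erase i)).card ≤
          ((Finset.univ : Finset (Fin k)).powersetCard 2).card := by
        apply Finset.card_le_card_of_injOn (fun x => ({x.1, x.2} : Finset (Fin k)))
        · rintro ⟨i, j⟩ hx
          rw [Finset.mem_coe, Finset.mem_sigma] at hx
          have hji : j ≠ i := Finset.ne_of_mem_erase hx.2
          rw [Finset.mem_coe, Finset.mem_powersetCard]
          refine ⟨Finset.subset_univ _, ?_⟩
          rw [Finset.card_insert_of_notMem (by simpa using (Ne.symm hji)), Finset.card_singleton]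
        · rintro ⟨i, j⟩ hx ⟨i', j'⟩ hx' heq
          rw [Finset.mem_coe, Finset.mem_sigma] at hx hx'
          have hji : j ≠ i := Finset.ne_of_mem_erase hx.2
          have hji' : j' ≠ i' := Finset.ne_of_mem_erase hx'.2
          have hjT : j ∈ T i := Finset.mem_of_mem_erase hx.2
          have hjT' : j' ∈ T i' := Finset.mem_of_mem_erase hx'.2
          simp only at heq
          have hcases : (i = i' ∧ j = j') ∨ (i = j' ∧ j = i') := by
            have hi : i ∈ ({i', j'} : Finset (Fin k)) := by rw [← heq]; simp
            have hj : j ∈ ({i', j'} : Finset (Fin k)) := by rw [← heq]; simp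
            have hi' : i' ∈ ({i, j} : Finset (Fin k)) := by rw [heq]; simp
            have hj' : j' ∈ ({i, j} : Finset (Fin k)) := by rw [heq]; simp
            simp only [Finset.mem_insert, Finset.mem_singleton] at hi hj hi' hj'
            tauto
          rcases hcases with ⟨h1, h2⟩ | ⟨h1, h2⟩
          · simp [h1, h2]
          · exfalso
            subst h1; subst h2
            have hT1 : 1 ≤ (p j).2 i := by simpa [hT] using hjT'
            have hT2 : 1 ≤ (p i).2 j := by simpa [hT] using hjT
            exact htour i j (Ne.symm hji) ⟨hT2, hT1⟩
      calc _ ≤ _ := this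
        _ = Nat.choose k 2 := by rw [Finset.card_powersetCard]; simp
    have hlow : ∀ i : Fin k, (k+1)/2 + 1 ≤ (T i).card := fun i => hcon i
    have hsumlow : k * ((k+1)/2 + 1) ≤ ∑ i : Fin k, (T i).card := by
      have h := Finset.card_nsmul_le_sum (Finset.univ : Finset (Fin k))
        (fun i => (T i).card) ((k+1)/2 + 1) (fun i _ => hlow i)
      simpa [mul_comm] using h
    have hsumsplit : ∑ i : Fin k, (T i).card = (∑ i : Fin k, ((T i).erase i).card) + k := by
      have h : ∑ i : Fin k, (T i).card = ∑ i : Fin k, (((T i).erase i).card + 1) :=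
        Finset.sum_congr rfl (fun i _ => hsum1 i)
      rw [h, Finset.sum_add_distrib]
      simp
    -- arithmetic contradiction
    set c := (k+1)/2 with hc
    set C := Nat.choose k 2 with hC
    have hA : k * (c + 1) ≤ C + k := by
      calc k * (c+1) ≤ ∑ i : Fin k, (T i).card := hsumlow
        _ = (∑ i : Fin k, ((T i).erase i).card) + k := hsumsplit
        _ ≤ C + k := by exact Nat.add_le_add_right hs2 k
    have h2C : 2 * C = k * (k - 1) := by
      rw [hC, Nat.choose_two_right]
      have hev : 2 ∣ k * (k - 1) := by
        rcases Nat.even_or_odd k with h | h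
        · exact Dvd.dvd.mul_right h.two_dvd _
        · have h1 : Even (k - 1) := by rcases h with ⟨t, ht⟩; exact ⟨t, by omega⟩
          exact Dvd.dvd.mul_left h1.two_dvd _
      rw [mul_comm]
      exact Nat.div_mul_cancel hev
    have hck : k ≤ 2 * c := by omega
    -- k*(k+2) ≤ k*(2c+2) = 2*(k*(c+1)) ≤ 2C + 2k = k*(k-1) + 2k = k*(k+1) < k*(k+2)
    have e1 : k * (k + 2) ≤ k * (2*c + 2) := Nat.mul_le_mul_left k (by omega)
    have e2 : k * (2*c + 2) = 2 * (k * (c + 1)) := by ring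
    have e3 : 2 * (k * (c+1)) ≤ 2 * (C + k) := Nat.mul_le_mul_left 2 hA
    have e4 : 2 * (C + k) = k * (k-1) + 2 * k := by rw [Nat.mul_add, h2C]
    have e5 : k * (k - 1) + 2 * k = k * (k + 1) := by
      obtain ⟨m, rfl⟩ : ∃ m, k = m + 1 := ⟨k - 1, by omega⟩
      simp only [Nat.add_sub_cancel]
      ring
    have e6 : k * (k + 1) < k * (k + 2) :=
      Nat.mul_lt_mul_of_le_of_lt (le_refl k) (by omega) (by omega)
    have hcontr : k * (k + 2) < k * (k + 2) := by
      calc k * (k+2) ≤ k * (2*c+2) := e1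
        _ = 2 * (k * (c+1)) := e2
        _ ≤ 2 * (C + k) := e3
        _ = k * (k-1) + 2 * k := e4
        _ = k * (k+1) := e5
        _ < k * (k+2) := e6
    exact lt_irrefl _ hcontr
  obtain ⟨i, hi⟩ := hsmall
  have : depthv (p i).2 ∈ (fun p => depthv p.2) '' P.pairs := ⟨p i, hpmem i, rfl⟩
  calc ndepthP P ≤ depthv (p i).2 := Nat.sInf_le this
    _ = (T i).card := hdepth i
    _ ≤ (k+1)/2 := hi

end Upper
theorem stmt3' (k : ℕ) (hk : 1 ≤ k) :
    ndepth (fun _ : Fin k => 1) = (k + 1) / 2 := by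
  obtain ⟨P₀, hP₀⟩ := exists_part hk
  have hub : ∀ P : IntervalPartition k (fun _ => 1), ndepthP P ≤ (k + 1) / 2 :=
    fun P => ndepthP_le hk P
  have hones : (fun _ : Fin k => (1:ℕ)) ∈ ground (fun _ : Fin k => 1) := by
    refine ⟨?_, fun i => le_rfl⟩
    intro h0
    have := congrFun h0 ⟨0, by omega⟩
    simp at this
  have hlow : (k + 1) / 2 ≤ ndepthP P₀ := by
    obtain ⟨q, hq, _⟩ := P₀.covers _ hones
    unfold ndepthP
    have hmem : depthv q.2 ∈ (fun p => depthv p.2) '' P₀.pairs := ⟨q, hq, rfl⟩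
    apply le_csInf ⟨_, hmem⟩
    rintro b ⟨r, hr, rfl⟩
    exact hP₀ r hr
  unfold ndepth
  apply le_antisymm
  · have hmem2 : ndepthP P₀ ∈ Set.range
        (fun P : IntervalPartition k (fun _ => 1) => ndepthP P) := ⟨P₀, rfl⟩
    apply csSup_le ⟨_, hmem2⟩
    rintro b ⟨P, rfl⟩
    exact hub P
  · have hbdd : BddAbove (Set.range (fun P : IntervalPartition k (fun _ => 1) => ndepthP P)) := by
      refine ⟨(k+1)/2, ?_⟩
      rintro b ⟨P, rfl⟩
      exact hub P
    exact le_trans hlow (le_csSup hbdd ⟨P₀, rfl⟩)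

/-- the new depth of the poset of nonzero 0-1 vectors of length `k`
(all multiplicities equal to 1) is `⌈k/2⌉`. -/
theorem stmt3 (k : ℕ) (hk : 1 ≤ k) :
    ndepth (fun _ : Fin k => 1) = (k + 1) / 2 := by
  exact stmt3' k hk
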